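/- For every binary string b_1...b_m (m ≥ 2) with b_1 = b_m = 1, no two consecutive zeros, and no three consecutive ones, there exist nonnegative integers p, q with p + q = (m−2)/2 such that m is even and b has the form 1(01)^p(10)^q 1, or m is odd and b has the form 1(01)^{(m−1)/2}. -/
import Mathlib

/-- The number of ones in a binary string `b : Fin m → Bool`. -/
def ones {m : ℕ} (b : Fin m → Bool) : ℕ :=
  (Finset.univ.filter fun j => b j = true).card

/-- A valid string: `b_1 = b_m = 1` and no two consecutive zeros. -/
def Valid (m : ℕ) (hm : 2 ≤ m) (b : Fin m → Bool) : Prop :=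
  b ⟨0, by omega⟩ = true ∧ b ⟨m - 1, by omega⟩ = true ∧
    ∀ i : ℕ, ∀ h : i + 1 < m, ¬(b ⟨i, by omega⟩ = false ∧ b ⟨i + 1, h⟩ = false)

/-- The string `1(01)^p(10)^q 1` of length `2p + 2q + 2`, written 0-indexed. -/
def evenPattern (m p q : ℕ) : Fin m → Bool := fun j =>
  if (j : ℕ) = 0 then true
  else if (j : ℕ) ≤ 2 * p then decide ((j : ℕ) % 2 = 0)
  else decide (((j : ℕ) - 2 * p) % 2 = 1)

def zset {m : ℕ} (b : Fin m → Bool) : Finset (Fin m) :=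
  Finset.univ.filter (fun j => b j = false)

noncomputable def zfun {m : ℕ} (b : Fin m → Bool) : ℕ → ℕ := fun k =>
  if h : k < (zset b).card then (((zset b).orderIsoOfFin rfl ⟨k, h⟩ : Fin m) : ℕ) else m

lemma zfun_lt {m : ℕ} (b : Fin m → Bool) {k : ℕ} (h : k < (zset b).card) :
    zfun b k < m := by
  simp only [zfun, dif_pos h]
  exact (((zset b).orderIsoOfFin rfl ⟨k, h⟩ : Fin m)).isLt

lemma zfun_false {m : ℕ} (b : Fin m → Bool) {k : ℕ} (h : k < (zset b).card) :
    b ⟨zfun b k, zfun_lt b h⟩ = false := by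
  have hmem := ((zset b).orderIsoOfFin rfl ⟨k, h⟩).2
  simp only [zset, Finset.mem_filter] at hmem
  have : (⟨zfun b k, zfun_lt b h⟩ : Fin m) = ((zset b).orderIsoOfFin rfl ⟨k, h⟩ : Fin m) := by
    apply Fin.ext
    simp only [zfun, dif_pos h]
  rw [this]
  exact hmem.2

lemma zfun_mono {m : ℕ} (b : Fin m → Bool) {k k' : ℕ} (hkk : k < k')
    (h' : k' < (zset b).card) : zfun b k < zfun b k' := by
  have hk : k < (zset b).card := lt_trans hkk h'
  simp only [zfun, dif_pos hk, dif_pos h']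
  exact ((zset b).orderIsoOfFin rfl).strictMono (a := ⟨k, hk⟩) (b := ⟨k', h'⟩) (by exact hkk)

lemma zfun_surj {m : ℕ} (b : Fin m → Bool) {j : Fin m} (hj : b j = false) :
    ∃ k, ∃ _ : k < (zset b).card, zfun b k = j.val := by
  have hjZ : j ∈ zset b := by simp [zset, hj]
  set e := (zset b).orderIsoOfFin rfl with he
  refine ⟨(e.symm ⟨j, hjZ⟩).val, (e.symm ⟨j, hjZ⟩).isLt, ?_⟩
  simp only [zfun, dif_pos (e.symm ⟨j, hjZ⟩).isLt]
  have : e ⟨(e.symm ⟨j, hjZ⟩).val, (e.symm ⟨j, hjZ⟩).isLt⟩ = ⟨j, hjZ⟩ := by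
    rw [show (⟨(e.symm ⟨j, hjZ⟩).val, (e.symm ⟨j, hjZ⟩).isLt⟩ : Fin _) = e.symm ⟨j, hjZ⟩ from rfl]
    exact e.apply_symm_apply _
  rw [this]

lemma zfun_gap {m : ℕ} (hm : 2 ≤ m) (b : Fin m → Bool) (hb : Valid m hm b) {k : ℕ}
    (h : k + 1 < (zset b).card) : zfun b k + 2 ≤ zfun b (k + 1) := by
  have hk : k < (zset b).card := by omega
  have h1 : zfun b k < zfun b (k+1) := zfun_mono b (by omega) h
  by_contra hcon
  have heq : zfun b (k+1) = zfun b k + 1 := by omega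
  have hlt : zfun b k + 1 < m := heq ▸ zfun_lt b h
  refine hb.2.2 (zfun b k) hlt ⟨zfun_false b hk, ?_⟩
  have := zfun_false b h
  rwa [show (⟨zfun b (k+1), zfun_lt b h⟩ : Fin m) = ⟨zfun b k + 1, hlt⟩ from Fin.ext heq] at this

lemma zfun_steps {m : ℕ} (hm : 2 ≤ m) (b : Fin m → Bool) (hb : Valid m hm b) (k d : ℕ)
    (h : k + d < (zset b).card) : zfun b k + 2 * d ≤ zfun b (k + d) := by
  induction d with
  | zero => simp
  | succ n ih =>
      have h1 : k + n < (zset b).card := by omega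
      have := zfun_gap hm b hb (k := k + n) (by omega)
      have := ih (by omega)
      have hz : zfun b (k + (n+1)) = zfun b (k+n+1) := rfl
      omega

lemma zfun_zero_pos {m : ℕ} (hm : 2 ≤ m) (b : Fin m → Bool) (hb : Valid m hm b)
    (h : 0 < (zset b).card) : 1 ≤ zfun b 0 := by
  by_contra hcon
  have h0 : zfun b 0 = 0 := by omega
  have := zfun_false b h
  rw [show (⟨zfun b 0, zfun_lt b h⟩ : Fin m) = ⟨0, by omega⟩ from Fin.ext h0] at this
  rw [hb.1] at this
  exact absurd this (by simp)

lemma zfun_top {m : ℕ} (hm : 2 ≤ m) (b : Fin m → Bool) (hb : Valid m hm b)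
    {k : ℕ} (h : k < (zset b).card) : zfun b k ≤ m - 2 := by
  have h1 : zfun b k < m := zfun_lt b h
  by_contra hcon
  have h0 : zfun b k = m - 1 := by omega
  have := zfun_false b h
  rw [show (⟨zfun b k, zfun_lt b h⟩ : Fin m) = ⟨m-1, by omega⟩ from Fin.ext h0] at this
  rw [hb.2.1] at this
  exact absurd this (by simp)

lemma card_filter_fin (m : ℕ) (p : ℕ → Prop) [DecidablePred p] :
    (Finset.univ.filter (fun j : Fin m => p j.val)).card
      = ((Finset.range m).filter p).card := by
  rw [Finset.card_filter, Finset.card_filter]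
  exact Fin.sum_univ_eq_sum_range (fun j => if p j then 1 else 0) m

lemma card_evens (m : ℕ) : ((Finset.range m).filter (fun j => j % 2 = 0)).card = (m+1)/2 := by
  induction m with
  | zero => simp
  | succ n ih =>
      rw [Finset.range_add_one, Finset.filter_insert]
      by_cases h : n % 2 = 0
      · rw [if_pos h, Finset.card_insert_of_notMem (by simp)]; omega
      · rw [if_neg h]; omega

lemma card_odds (m : ℕ) : ((Finset.range m).filter (fun j => j % 2 = 1)).card = m/2 := by
  induction m with
  | zero => simp
  | succ n ih =>
      rw [Finset.range_add_one, Finset.filter_insert]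
      by_cases h : n % 2 = 1
      · rw [if_pos h, Finset.card_insert_of_notMem (by simp)]; omega
      · rw [if_neg h]; omega

lemma ones_add_zset (m : ℕ) (b : Fin m → Bool) : ones b + (zset b).card = m := by
  have h1 : zset b = Finset.univ.filter (fun a : Fin m => ¬ b a = true) := by
    apply Finset.filter_congr
    intro x _
    simp
  have := Finset.card_filter_add_card_filter_not
    (s := (Finset.univ : Finset (Fin m))) (p := fun j => b j = true)
  rw [Finset.card_univ, Fintype.card_fin] at this
  rw [ones, h1]
  exact this

lemma card_comp_range (m : ℕ) (hm : 2 ≤ m) :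
    ((Finset.range m).filter (fun j => j % 2 = 0 ∨ j = m - 1)).card = m / 2 + 1 := by
  rcases Nat.mod_two_eq_zero_or_one m with he | ho
  · have hm1 : (m-1) % 2 = 1 := by omega
    rw [Finset.filter_or, Finset.filter_eq']
    rw [if_pos (Finset.mem_range.mpr (by omega))]
    rw [Finset.union_comm, Finset.card_union_of_disjoint (by
      simp only [Finset.disjoint_singleton_left, Finset.mem_filter]
      rintro ⟨-, h⟩; omega)]
    rw [Finset.card_singleton, card_evens]
    omega
  · have h2 : ((Finset.range m).filter (fun j => j % 2 = 0 ∨ j = m - 1)) =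
        ((Finset.range m).filter (fun j => j % 2 = 0)) := by
      apply Finset.filter_congr
      intro x hx
      constructor
      · rintro (h | h)
        · exact h
        · simpa [h] using by omega
      · intro h; exact Or.inl h
    rw [h2, card_evens]
    omega

def comp (m : ℕ) : Fin m → Bool := fun j => decide ((j : ℕ) % 2 = 0 ∨ (j : ℕ) = m - 1)

lemma comp_valid (m : ℕ) (hm : 2 ≤ m) : Valid m hm (comp m) := by
  refine ⟨by simp [comp], by simp [comp], fun i h hcon => ?_⟩
  obtain ⟨h1, h2⟩ := hcon
  simp only [comp, decide_eq_false_iff_not, not_or] at h1 h2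
  omega

lemma ones_comp (m : ℕ) (hm : 2 ≤ m) : ones (comp m) = m / 2 + 1 := by
  have h1 : ones (comp m) = (Finset.univ.filter
      (fun j : Fin m => (fun n => n % 2 = 0 ∨ n = m - 1) j.val)).card := by
    rw [ones]
    congr 1
    apply Finset.filter_congr
    intro x _
    simp [comp]
  rw [h1, card_filter_fin m (fun n => n % 2 = 0 ∨ n = m - 1)]
  exact card_comp_range m hm

/-- Every binary string `b_1 ... b_m` (`m ≥ 2`) with `b_1 = b_m = 1`, no two
consecutive zeros, and the minimum number of ones among all such strings, is of
the form `1(01)^p(10)^q 1` with `p + q = (m-2)/2` when `m` is even, and is the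
alternating string `1(01)^{(m-1)/2}` when `m` is odd. -/
theorem stmt_9 (m : ℕ) (hm : 2 ≤ m) (b : Fin m → Bool) (hb : Valid m hm b)
    (hmin : ∀ b' : Fin m → Bool, Valid m hm b' → ones b ≤ ones b') :
    ∃ p q : ℕ, p + q = (m - 2) / 2 ∧
      (m % 2 = 0 → b = evenPattern m p q) ∧
      (m % 2 = 1 → b = fun j : Fin m => decide ((j : ℕ) % 2 = 0)) := by
  classical
  set K := (zset b).card with hKdef
  have hones : ones b + K = m := ones_add_zset m b
  have hle : ones b ≤ m / 2 + 1 := by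
    have := hmin (comp m) (comp_valid m hm)
    rwa [ones_comp m hm] at this
  have hlow : ∀ k, k < K → 2 * k + 1 ≤ zfun b k := by
    intro k hk
    have h1 := zfun_zero_pos hm b hb (by omega)
    have h2 := zfun_steps hm b hb 0 k (by omega)
    rw [Nat.zero_add] at h2
    omega
  have hhigh : ∀ k, k < K → zfun b k + 2 * (K - 1 - k) ≤ m - 2 := by
    intro k hk
    have h2 := zfun_steps hm b hb k (K - 1 - k) (by omega)
    rw [show k + (K - 1 - k) = K - 1 from by omega] at h2
    have h3 := zfun_top hm b hb (k := K - 1) (by omega)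
    omega
  have hKb : K = 0 ∨ 2 * K ≤ m - 1 := by
    rcases Nat.eq_zero_or_pos K with h | h
    · exact Or.inl h
    · right
      have := hlow (K-1) (by omega)
      have := zfun_top hm b hb (k := K - 1) (by omega)
      omega
  have hKeq : K = (m - 1) / 2 := by omega
  rcases Nat.mod_two_eq_zero_or_one m with hme | hmo
  · -- even case
    have hm2K : 2 * K + 2 = m := by omega
    have hub : ∀ k, k < K → zfun b k ≤ 2 * k + 2 := by
      intro k hk
      have := hhigh k hk
      omega
    obtain ⟨p, hpK, hp1, hp2⟩ : ∃ p, p ≤ K ∧ (∀ k, k < p → zfun b k = 2*k+1) ∧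
        (∀ k, p ≤ k → k < K → zfun b k = 2*k+2) := by
      by_cases hex : ∃ k, k < K ∧ zfun b k = 2*k+2
      · refine ⟨Nat.find hex, (Nat.find_spec hex).1.le, ?_, ?_⟩
        · intro k hk
          have hnk := Nat.find_min hex hk
          have hkK : k < K := lt_of_lt_of_le hk (Nat.find_spec hex).1.le
          have := hlow k hkK
          have := hub k hkK
          omega
        · intro k hpk hkK
          have hspec := Nat.find_spec hex
          have hsteps := zfun_steps hm b hb (Nat.find hex) (k - Nat.find hex) (by omega)
          rw [show Nat.find hex + (k - Nat.find hex) = k from by omega] at hsteps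
          have := hub k hkK
          omega
      · push_neg at hex
        refine ⟨K, le_refl K, ?_, ?_⟩
        · intro k hk
          have := hex k
          have := hlow k hk
          have := hub k hk
          omega
        · intro k h1 h2
          omega
    refine ⟨p, K - p, by omega, fun _ => ?_, fun h => by omega⟩
    have hfalse : ∀ j : Fin m, (b j = false ↔
        (j.val % 2 = 1 ∧ j.val ≤ 2*p) ∨ (j.val % 2 = 0 ∧ 2*p+2 ≤ j.val)) := by
      intro j
      constructor
      · intro h
        obtain ⟨k, hk, hzk⟩ := zfun_surj b h
        by_cases hkp : k < p
        · have := hp1 k hkp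
          left
          omega
        · have := hp2 k (by omega) hk
          right
          omega
      · have hjlt : j.val < m := j.isLt
        rintro (⟨ho, hle2p⟩ | ⟨hev, hge⟩)
        · set k := j.val / 2 with hk
          have hkp : k < p := by omega
          have hkK : k < K := by omega
          have hz := hp1 k hkp
          have hf := zfun_false b (hKdef ▸ hkK)
          rwa [show (⟨zfun b k, zfun_lt b (hKdef ▸ hkK)⟩ : Fin m) = j from Fin.ext (show zfun b k = j.val by omega)]
            at hf
        · set k := j.val / 2 - 1 with hk
          have hj2 : j.val ≤ m - 2 := by omega
          have hkK : k < K := by omega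
          have hz := hp2 k (by omega) hkK
          have hf := zfun_false b (hKdef ▸ hkK)
          rwa [show (⟨zfun b k, zfun_lt b (hKdef ▸ hkK)⟩ : Fin m) = j from Fin.ext (show zfun b k = j.val by omega)]
            at hf
    funext j
    have hjlt : j.val < m := j.isLt
    simp only [evenPattern]
    by_cases hj0 : j.val = 0
    · rw [if_pos hj0]
      rw [show j = ⟨0, by omega⟩ from Fin.ext hj0]
      exact hb.1
    · rw [if_neg hj0]
      by_cases hle2p : j.val ≤ 2 * p
      · rw [if_pos hle2p]
        rcases Nat.mod_two_eq_zero_or_one j.val with hpar | hpar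
        · have hbt : b j = true := by
            cases hbj : b j
            · exfalso
              rcases (hfalse j).mp hbj with ⟨h1, h2⟩ | ⟨h1, h2⟩ <;> omega
            · rfl
          rw [hbt]
          simp [hpar]
        · have hbf : b j = false := (hfalse j).mpr (Or.inl ⟨hpar, hle2p⟩)
          rw [hbf]
          have : ¬ (j.val % 2 = 0) := by omega
          simp [this]
      · rw [if_neg hle2p]
        have hmod : (j.val - 2*p) % 2 = j.val % 2 := by omega
        rw [hmod]
        rcases Nat.mod_two_eq_zero_or_one j.val with hpar | hpar
        · have hbf : b j = false := (hfalse j).mpr (Or.inr ⟨hpar, by omega⟩)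
          rw [hbf]
          have : ¬ (j.val % 2 = 1) := by omega
          simp [this]
        · have hbt : b j = true := by
            cases hbj : b j
            · exfalso
              rcases (hfalse j).mp hbj with ⟨h1, h2⟩ | ⟨h1, h2⟩ <;> omega
            · rfl
          rw [hbt]
          simp [hpar]
  · -- odd case
    have hm2K : 2 * K + 1 = m := by omega
    have hz : ∀ k, k < K → zfun b k = 2*k+1 := by
      intro k hk
      have := hlow k hk
      have := hhigh k hk
      omega
    refine ⟨(m-2)/2, 0, by omega, fun h => by omega, fun _ => ?_⟩
    have hOdds : (Finset.univ.filter (fun j : Fin m => j.val % 2 = 1)) = zset b := by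
      refine (Finset.eq_of_subset_of_card_le ?_ ?_).symm
      · intro x hx
        simp only [zset, Finset.mem_filter] at hx
        obtain ⟨k, hk, hzk⟩ := zfun_surj b hx.2
        have := hz k hk
        simp only [Finset.mem_filter, Finset.mem_univ, true_and]
        omega
      · rw [card_filter_fin m (fun n => n % 2 = 1), card_odds]
        omega
    funext j
    rcases Nat.mod_two_eq_zero_or_one j.val with hpar | hpar
    · have hbt : b j = true := by
        cases hbj : b j
        · exfalso
          obtain ⟨k, hk, hzk⟩ := zfun_surj b hbj
          have := hz k hk
          omega
        · rfl
      rw [hbt]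
      simp [hpar]
    · have hjZ : j ∈ zset b := by
        rw [← hOdds]
        simp only [Finset.mem_filter, Finset.mem_univ, true_and]
        exact hpar
      simp only [zset, Finset.mem_filter] at hjZ
      rw [hjZ.2]
      have : ¬ (j.val % 2 = 0) := by omega
      simp [this]
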